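/- Let T be a nonzero positive semidefinite self-adjoint operator on an n-dimensional inner product space. Then there exist a weight v > 0 and two idempotents P₁, P₂ such that T = v²P₁*P₁ + v²P₂*P₂. -/

import Mathlib

set_option linter.unusedSectionVars false
set_option maxHeartbeats 1000000

open LinearMap Finset

namespace Stmt11Aux

variable {𝕜 E : Type*} [RCLike 𝕜] [NormedAddCommGroup E]
    [InnerProductSpace 𝕜 E] [FiniteDimensional 𝕜 E]

local notation "⟪" x ", " y "⟫" => @inner 𝕜 _ _ x y

/-- x ↦ ∑ k, ⟪u k, x⟫ • w k -/
noncomputable def famOp (u w : ℕ → E) (n : ℕ) : E →ₗ[𝕜] E :=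
  ∑ k ∈ Finset.range n, (innerₛₗ 𝕜 (u k)).smulRight (w k)

theorem famOp_apply (u w : ℕ → E) (n : ℕ) (x : E) :
    famOp (𝕜 := 𝕜) u w n x = ∑ k ∈ Finset.range n, ⟪u k, x⟫ • w k := by
  simp [famOp]

theorem famOp_adjoint (u w : ℕ → E) (n : ℕ) :
    LinearMap.adjoint (famOp (𝕜 := 𝕜) u w n) = famOp w u n := by
  symm
  rw [LinearMap.eq_adjoint_iff]
  intro x y
  simp only [famOp_apply, sum_inner, inner_sum, inner_smul_left, inner_smul_right]
  refine Finset.sum_congr rfl fun k _ => ?_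
  rw [inner_conj_symm]
  ring

theorem famOp_comp (u w u' w' z : ℕ → E) (n : ℕ)
    (h : ∀ j < n, ∑ i ∈ Finset.range n, ⟪u' i, w j⟫ • w' i = z j) :
    (famOp (𝕜 := 𝕜) u' w' n) ∘ₗ (famOp u w n) = famOp u z n := by
  ext x
  simp only [LinearMap.comp_apply, famOp_apply, inner_sum, inner_smul_right]
  simp only [Finset.sum_smul, smul_smul]
  rw [Finset.sum_comm]
  refine Finset.sum_congr rfl fun j hj => ?_
  rw [← h j (Finset.mem_range.mp hj), Finset.smul_sum]
  refine Finset.sum_congr rfl fun i _ => ?_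
  rw [smul_smul, mul_comm]

/-- two-dim block vector -/
noncomputable def B2 (ee : ℕ → E) (x y : ℝ) (m : ℕ) : E :=
  ((x : 𝕜) • ee m) + ((y : 𝕜) • ee (m + 1))

noncomputable def CC (la : ℕ → ℝ) (m : ℕ) : ℝ :=
  Real.sqrt (la m / (la m + la (m + 1)))

noncomputable def TT (la : ℕ → ℝ) (m : ℕ) : ℝ :=
  Real.sqrt (la (m + 1) / (la m + la (m + 1)))

noncomputable def GG (la : ℕ → ℝ) (ls : ℝ) (m : ℕ) : ℝ :=
  Real.sqrt ((la m + la (m + 1)) / ls - 1)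

noncomputable def RR (la : ℕ → ℝ) (ls : ℝ) (m : ℕ) : ℝ := (la m + la (m + 1)) / ls

noncomputable def U1 (ee : ℕ → E) (la : ℕ → ℝ) (m : ℕ) : E :=
  if m % 2 = 0 then B2 (𝕜 := 𝕜) ee (CC la m) (TT la m) m else 0

noncomputable def U2 (ee : ℕ → E) (la : ℕ → ℝ) (m : ℕ) : E :=
  if m % 2 = 0 then B2 (𝕜 := 𝕜) ee (CC la m) (-TT la m) m else 0

noncomputable def W1 (ee : ℕ → E) (la : ℕ → ℝ) (ls : ℝ) (m : ℕ) : E :=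
  if m % 2 = 0 then
    B2 (𝕜 := 𝕜) ee (CC la m - GG la ls m * TT la m) (TT la m + GG la ls m * CC la m) m else 0

noncomputable def W2 (ee : ℕ → E) (la : ℕ → ℝ) (ls : ℝ) (m : ℕ) : E :=
  if m % 2 = 0 then
    B2 (𝕜 := 𝕜) ee (CC la m + GG la ls m * TT la m) (-TT la m + GG la ls m * CC la m) m else 0

noncomputable def Z1 (ee : ℕ → E) (la : ℕ → ℝ) (ls : ℝ) (m : ℕ) : E :=
  ((RR la ls m : ℝ) : 𝕜) • U1 (𝕜 := 𝕜) ee la m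

noncomputable def Z2 (ee : ℕ → E) (la : ℕ → ℝ) (ls : ℝ) (m : ℕ) : E :=
  ((RR la ls m : ℝ) : 𝕜) • U2 (𝕜 := 𝕜) ee la m


section Facts

variable {n : ℕ} {ee : ℕ → E} {la : ℕ → ℝ} {ls : ℝ}

theorem Q_pos (hla0 : ∀ m, 0 ≤ la m) {m : ℕ} (hq : la m + la (m + 1) ≠ 0) :
    0 < la m + la (m + 1) :=
  lt_of_le_of_ne (add_nonneg (hla0 m) (hla0 (m + 1))) (Ne.symm hq)

theorem CC_sq (hla0 : ∀ m, 0 ≤ la m) {m : ℕ} (hq : la m + la (m + 1) ≠ 0) :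
    CC la m ^ 2 = la m / (la m + la (m + 1)) :=
  Real.sq_sqrt (div_nonneg (hla0 m) (Q_pos hla0 hq).le)

theorem TT_sq (hla0 : ∀ m, 0 ≤ la m) {m : ℕ} (hq : la m + la (m + 1) ≠ 0) :
    TT la m ^ 2 = la (m + 1) / (la m + la (m + 1)) :=
  Real.sq_sqrt (div_nonneg (hla0 (m + 1)) (Q_pos hla0 hq).le)

theorem ls_le_Q (hla0 : ∀ m, 0 ≤ la m) (hmin : ∀ m, la m ≠ 0 → ls ≤ la m)
    {m : ℕ} (hq : la m + la (m + 1) ≠ 0) : ls ≤ la m + la (m + 1) := by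
  rcases eq_or_ne (la m) 0 with h | h
  · have h' : la (m + 1) ≠ 0 := fun h' => hq (by rw [h, h']; ring)
    have := hmin _ h'
    linarith [hla0 m]
  · have := hmin _ h
    linarith [hla0 (m + 1)]

theorem GG_sq (hls : 0 < ls) (hla0 : ∀ m, 0 ≤ la m) (hmin : ∀ m, la m ≠ 0 → ls ≤ la m)
    {m : ℕ} (hq : la m + la (m + 1) ≠ 0) :
    GG la ls m ^ 2 = (la m + la (m + 1)) / ls - 1 := by
  refine Real.sq_sqrt ?_
  rw [sub_nonneg, le_div_iff₀ hls, one_mul]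
  exact ls_le_Q hla0 hmin hq

theorem CT_one (hla0 : ∀ m, 0 ≤ la m) {m : ℕ} (hq : la m + la (m + 1) ≠ 0) :
    CC la m ^ 2 + TT la m ^ 2 = 1 := by
  rw [CC_sq hla0 hq, TT_sq hla0 hq]
  field_simp

theorem Q_zero (hla0 : ∀ m, 0 ≤ la m) {m : ℕ} (hq : la m + la (m + 1) = 0) :
    la m = 0 ∧ la (m + 1) = 0 :=
  ⟨by linarith [hla0 m, hla0 (m + 1)], by linarith [hla0 m, hla0 (m + 1)]⟩

theorem CC_zero {m : ℕ} (hq : la m + la (m + 1) = 0) : CC la m = 0 := by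
  rw [CC, hq, div_zero, Real.sqrt_zero]

theorem TT_zero {m : ℕ} (hq : la m + la (m + 1) = 0) : TT la m = 0 := by
  rw [TT, hq, div_zero, Real.sqrt_zero]

theorem GG_zero (hls : 0 < ls) {m : ℕ} (hq : la m + la (m + 1) = 0) : GG la ls m = 0 := by
  rw [GG, hq, zero_div, Real.sqrt_eq_zero']
  norm_num

theorem B2_zero {m : ℕ} : B2 (𝕜 := 𝕜) ee 0 0 m = 0 := by simp [B2]

theorem ee_inner_ne (hee : ∀ a b : ℕ, ⟪ee a, ee b⟫ = if a = b ∧ a < n then 1 else 0)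
    {a b : ℕ} (h : a ≠ b) : ⟪ee a, ee b⟫ = 0 := by
  rw [hee]; simp [h]

theorem ee_inner_self (hee : ∀ a b : ℕ, ⟪ee a, ee b⟫ = if a = b ∧ a < n then 1 else 0)
    {a : ℕ} (h : a < n) : ⟪ee a, ee a⟫ = 1 := by
  rw [hee]; simp [h]

theorem B2_inner_ne (hee : ∀ a b : ℕ, ⟪ee a, ee b⟫ = if a = b ∧ a < n then 1 else 0)
    {x y x' y' : ℝ} {i j : ℕ} (hij : i ≠ j) (hi : i % 2 = 0) (hj : j % 2 = 0) :
    ⟪B2 (𝕜 := 𝕜) ee x y i, B2 (𝕜 := 𝕜) ee x' y' j⟫ = 0 := by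
  simp only [B2, inner_add_left, inner_add_right, inner_smul_left, inner_smul_right,
    RCLike.conj_ofReal]
  rw [ee_inner_ne hee (by omega : i ≠ j), ee_inner_ne hee (by omega : i ≠ j + 1),
    ee_inner_ne hee (by omega : i + 1 ≠ j), ee_inner_ne hee (by omega : i + 1 ≠ j + 1)]
  ring

theorem B2_inner_self (hee : ∀ a b : ℕ, ⟪ee a, ee b⟫ = if a = b ∧ a < n then 1 else 0)
    {x y x' y' : ℝ} {m : ℕ} (hm : m < n) (hy : m + 1 < n ∨ y = 0 ∨ y' = 0) :
    ⟪B2 (𝕜 := 𝕜) ee x y m, B2 (𝕜 := 𝕜) ee x' y' m⟫ = ((x * x' + y * y' : ℝ) : 𝕜) := by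
  simp only [B2, inner_add_left, inner_add_right, inner_smul_left, inner_smul_right,
    RCLike.conj_ofReal]
  rw [ee_inner_self hee hm, ee_inner_ne hee (by omega : m ≠ m + 1),
    ee_inner_ne hee (by omega : m + 1 ≠ m)]
  have h4 : ⟪ee (m + 1), ee (m + 1)⟫ = (if m + 1 < n then 1 else 0 : 𝕜) := by
    rw [hee]; simp
  rcases hy with hy | hy | hy
  · rw [h4, if_pos hy]; push_cast; ring
  · rw [h4, hy]; push_cast; ring
  · rw [h4, hy]; push_cast; ring

theorem B2_inner_ee_ne (hee : ∀ a b : ℕ, ⟪ee a, ee b⟫ = if a = b ∧ a < n then 1 else 0)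
    {x y : ℝ} {m p : ℕ} (h1 : m ≠ p) (h2 : m + 1 ≠ p) :
    ⟪B2 (𝕜 := 𝕜) ee x y m, ee p⟫ = 0 := by
  simp only [B2, inner_add_left, inner_smul_left, RCLike.conj_ofReal]
  rw [ee_inner_ne hee h1, ee_inner_ne hee h2]
  ring

theorem B2_inner_ee_self (hee : ∀ a b : ℕ, ⟪ee a, ee b⟫ = if a = b ∧ a < n then 1 else 0)
    {x y : ℝ} {m : ℕ} (hm : m < n) :
    ⟪B2 (𝕜 := 𝕜) ee x y m, ee m⟫ = (x : 𝕜) := by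
  simp only [B2, inner_add_left, inner_smul_left, RCLike.conj_ofReal]
  rw [ee_inner_self hee hm, ee_inner_ne hee (by omega : m + 1 ≠ m)]
  ring

theorem B2_inner_ee_succ (hee : ∀ a b : ℕ, ⟪ee a, ee b⟫ = if a = b ∧ a < n then 1 else 0)
    {x y : ℝ} {m : ℕ} (hm : m + 1 < n) :
    ⟪B2 (𝕜 := 𝕜) ee x y m, ee (m + 1)⟫ = (y : 𝕜) := by
  simp only [B2, inner_add_left, inner_smul_left, RCLike.conj_ofReal]
  rw [ee_inner_self hee hm, ee_inner_ne hee (by omega : m ≠ m + 1)]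
  ring

theorem sum_UW1 (hee : ∀ a b : ℕ, ⟪ee a, ee b⟫ = if a = b ∧ a < n then 1 else 0)
    (hls : 0 < ls) (hla0 : ∀ m, 0 ≤ la m) (hlan : ∀ m, ¬ m < n → la m = 0) :
    ∀ j < n, ∑ i ∈ Finset.range n, ⟪U1 (𝕜 := 𝕜) ee la i, W1 (𝕜 := 𝕜) ee la ls j⟫
      • W1 (𝕜 := 𝕜) ee la ls i = W1 (𝕜 := 𝕜) ee la ls j := by
  intro j hj
  by_cases hj2 : j % 2 = 0
  swap
  · simp [W1, hj2]
  rw [Finset.sum_eq_single j]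
  · simp only [U1, W1, if_pos hj2]
    by_cases hq : la j + la (j + 1) = 0
    · rw [CC_zero hq, TT_zero hq, GG_zero hls hq]
      norm_num [B2_zero]
    · have hy : j + 1 < n ∨ TT la j = 0 ∨ TT la j + GG la ls j * CC la j = 0 := by
        by_cases hb : j + 1 < n
        · exact Or.inl hb
        · refine Or.inr (Or.inl ?_)
          rw [TT, hlan _ hb, zero_div, Real.sqrt_zero]
      rw [B2_inner_self hee hj hy]
      have hone : CC la j * (CC la j - GG la ls j * TT la j) +
          TT la j * (TT la j + GG la ls j * CC la j) = 1 := by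
        linear_combination CT_one hla0 hq
      rw [hone]
      norm_num
  · intro i _ hij
    by_cases hi2 : i % 2 = 0
    · simp only [U1, W1, if_pos hi2, if_pos hj2]
      rw [B2_inner_ne hee hij hi2 hj2, zero_smul]
    · simp [U1, hi2]
  · intro h
    exact absurd (Finset.mem_range.mpr hj) h

theorem sum_UW2 (hee : ∀ a b : ℕ, ⟪ee a, ee b⟫ = if a = b ∧ a < n then 1 else 0)
    (hls : 0 < ls) (hla0 : ∀ m, 0 ≤ la m) (hlan : ∀ m, ¬ m < n → la m = 0) :
    ∀ j < n, ∑ i ∈ Finset.range n, ⟪U2 (𝕜 := 𝕜) ee la i, W2 (𝕜 := 𝕜) ee la ls j⟫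
      • W2 (𝕜 := 𝕜) ee la ls i = W2 (𝕜 := 𝕜) ee la ls j := by
  intro j hj
  by_cases hj2 : j % 2 = 0
  swap
  · simp [W2, hj2]
  rw [Finset.sum_eq_single j]
  · simp only [U2, W2, if_pos hj2]
    by_cases hq : la j + la (j + 1) = 0
    · rw [CC_zero hq, TT_zero hq, GG_zero hls hq]
      norm_num [B2_zero]
    · have hy : j + 1 < n ∨ -TT la j = 0 ∨ -TT la j + GG la ls j * CC la j = 0 := by
        by_cases hb : j + 1 < n
        · exact Or.inl hb
        · refine Or.inr (Or.inl ?_)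
          rw [TT, hlan _ hb, zero_div, Real.sqrt_zero, neg_zero]
      rw [B2_inner_self hee hj hy]
      have hone : CC la j * (CC la j + GG la ls j * TT la j) +
          -TT la j * (-TT la j + GG la ls j * CC la j) = 1 := by
        linear_combination CT_one hla0 hq
      rw [hone]
      norm_num
  · intro i _ hij
    by_cases hi2 : i % 2 = 0
    · simp only [U2, W2, if_pos hi2, if_pos hj2]
      rw [B2_inner_ne hee hij hi2 hj2, zero_smul]
    · simp [U2, hi2]
  · intro h
    exact absurd (Finset.mem_range.mpr hj) h

theorem boundary_Q (hls : 0 < ls) (hla0 : ∀ m, 0 ≤ la m) (hlan : ∀ m, ¬ m < n → la m = 0)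
    (hlast : la (n - 1) = 0 ∨ la (n - 1) = ls) {j : ℕ} (hj : j < n) (hb : ¬ j + 1 < n)
    (hq : la j + la (j + 1) ≠ 0) : la j + la (j + 1) = ls := by
  have hj' : j = n - 1 := by omega
  have h1 : la (j + 1) = 0 := hlan _ hb
  rcases hlast with h | h
  · exact absurd (by rw [hj', h, ← hj', h1]; ring) hq
  · rw [h1, hj', h, add_zero]

theorem GG_boundary (hls : 0 < ls) (hla0 : ∀ m, 0 ≤ la m) (hlan : ∀ m, ¬ m < n → la m = 0)
    (hlast : la (n - 1) = 0 ∨ la (n - 1) = ls) {j : ℕ} (hj : j < n) (hb : ¬ j + 1 < n)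
    (hq : la j + la (j + 1) ≠ 0) : GG la ls j = 0 := by
  rw [GG, boundary_Q hls hla0 hlan hlast hj hb hq, div_self hls.ne', sub_self, Real.sqrt_zero]

theorem CC_sq_boundary (hls : 0 < ls) (hla0 : ∀ m, 0 ≤ la m) (hlan : ∀ m, ¬ m < n → la m = 0)
    (hlast : la (n - 1) = 0 ∨ la (n - 1) = ls) {j : ℕ} (hj : j < n) (hb : ¬ j + 1 < n)
    (hq : la j + la (j + 1) ≠ 0) : CC la j ^ 2 = 1 := by
  rw [CC_sq hla0 hq, boundary_Q hls hla0 hlan hlast hj hb hq]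
  have h1 : la (j + 1) = 0 := hlan _ hb
  have h2 : la j + la (j + 1) = ls := boundary_Q hls hla0 hlan hlast hj hb hq
  rw [h1, add_zero] at h2
  rw [h2, div_self hls.ne']

theorem RR_boundary (hls : 0 < ls) (hla0 : ∀ m, 0 ≤ la m) (hlan : ∀ m, ¬ m < n → la m = 0)
    (hlast : la (n - 1) = 0 ∨ la (n - 1) = ls) {j : ℕ} (hj : j < n) (hb : ¬ j + 1 < n)
    (hq : la j + la (j + 1) ≠ 0) : RR la ls j = 1 := by
  rw [RR, boundary_Q hls hla0 hlan hlast hj hb hq, div_self hls.ne']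

theorem sum_WW1 (hee : ∀ a b : ℕ, ⟪ee a, ee b⟫ = if a = b ∧ a < n then 1 else 0)
    (hls : 0 < ls) (hla0 : ∀ m, 0 ≤ la m) (hmin : ∀ m, la m ≠ 0 → ls ≤ la m)
    (hlan : ∀ m, ¬ m < n → la m = 0) (hlast : la (n - 1) = 0 ∨ la (n - 1) = ls) :
    ∀ j < n, ∑ i ∈ Finset.range n, ⟪W1 (𝕜 := 𝕜) ee la ls i, W1 (𝕜 := 𝕜) ee la ls j⟫
      • U1 (𝕜 := 𝕜) ee la i = Z1 (𝕜 := 𝕜) ee la ls j := by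
  intro j hj
  by_cases hj2 : j % 2 = 0
  swap
  · simp [W1, U1, Z1, hj2]
  rw [Finset.sum_eq_single j]
  · simp only [U1, W1, Z1, if_pos hj2]
    by_cases hq : la j + la (j + 1) = 0
    · rw [CC_zero hq, TT_zero hq, GG_zero hls hq]
      norm_num [B2_zero]
    · by_cases hb : j + 1 < n
      · rw [B2_inner_self hee hj (Or.inl hb)]
        have hcoef : (CC la j - GG la ls j * TT la j) * (CC la j - GG la ls j * TT la j) +
            (TT la j + GG la ls j * CC la j) * (TT la j + GG la ls j * CC la j)
            = RR la ls j := by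
          have h1 := CT_one hla0 hq
          have h2 := GG_sq hls hla0 hmin hq
          rw [RR]
          linear_combination (1 + GG la ls j ^ 2) * h1 + h2
        rw [hcoef]
      · have hT0 : TT la j = 0 := by rw [TT, hlan _ hb, zero_div, Real.sqrt_zero]
        have hG0 : GG la ls j = 0 := GG_boundary hls hla0 hlan hlast hj hb hq
        have hy : j + 1 < n ∨ (TT la j + GG la ls j * CC la j) = 0 ∨
            (TT la j + GG la ls j * CC la j) = 0 := by
          refine Or.inr (Or.inl ?_)
          rw [hT0, hG0]; ring
        rw [B2_inner_self hee hj hy]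
        have hcoef : (CC la j - GG la ls j * TT la j) * (CC la j - GG la ls j * TT la j) +
            (TT la j + GG la ls j * CC la j) * (TT la j + GG la ls j * CC la j)
            = RR la ls j := by
          rw [hT0, hG0, RR_boundary hls hla0 hlan hlast hj hb hq]
          linear_combination CC_sq_boundary hls hla0 hlan hlast hj hb hq
        rw [hcoef]
  · intro i _ hij
    by_cases hi2 : i % 2 = 0
    · simp only [U1, W1, if_pos hi2, if_pos hj2]
      rw [B2_inner_ne hee hij hi2 hj2, zero_smul]
    · simp [U1, W1, hi2]
  · intro h
    exact absurd (Finset.mem_range.mpr hj) h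

theorem sum_WW2 (hee : ∀ a b : ℕ, ⟪ee a, ee b⟫ = if a = b ∧ a < n then 1 else 0)
    (hls : 0 < ls) (hla0 : ∀ m, 0 ≤ la m) (hmin : ∀ m, la m ≠ 0 → ls ≤ la m)
    (hlan : ∀ m, ¬ m < n → la m = 0) (hlast : la (n - 1) = 0 ∨ la (n - 1) = ls) :
    ∀ j < n, ∑ i ∈ Finset.range n, ⟪W2 (𝕜 := 𝕜) ee la ls i, W2 (𝕜 := 𝕜) ee la ls j⟫
      • U2 (𝕜 := 𝕜) ee la i = Z2 (𝕜 := 𝕜) ee la ls j := by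
  intro j hj
  by_cases hj2 : j % 2 = 0
  swap
  · simp [W2, U2, Z2, hj2]
  rw [Finset.sum_eq_single j]
  · simp only [U2, W2, Z2, if_pos hj2]
    by_cases hq : la j + la (j + 1) = 0
    · rw [CC_zero hq, TT_zero hq, GG_zero hls hq]
      norm_num [B2_zero]
    · by_cases hb : j + 1 < n
      · rw [B2_inner_self hee hj (Or.inl hb)]
        have hcoef : (CC la j + GG la ls j * TT la j) * (CC la j + GG la ls j * TT la j) +
            (-TT la j + GG la ls j * CC la j) * (-TT la j + GG la ls j * CC la j)
            = RR la ls j := by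
          have h1 := CT_one hla0 hq
          have h2 := GG_sq hls hla0 hmin hq
          rw [RR]
          linear_combination (1 + GG la ls j ^ 2) * h1 + h2
        rw [hcoef]
      · have hT0 : TT la j = 0 := by rw [TT, hlan _ hb, zero_div, Real.sqrt_zero]
        have hG0 : GG la ls j = 0 := GG_boundary hls hla0 hlan hlast hj hb hq
        have hy : j + 1 < n ∨ (-TT la j + GG la ls j * CC la j) = 0 ∨
            (-TT la j + GG la ls j * CC la j) = 0 := by
          refine Or.inr (Or.inl ?_)
          rw [hT0, hG0]; ring
        rw [B2_inner_self hee hj hy]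
        have hcoef : (CC la j + GG la ls j * TT la j) * (CC la j + GG la ls j * TT la j) +
            (-TT la j + GG la ls j * CC la j) * (-TT la j + GG la ls j * CC la j)
            = RR la ls j := by
          rw [hT0, hG0, RR_boundary hls hla0 hlan hlast hj hb hq]
          linear_combination CC_sq_boundary hls hla0 hlan hlast hj hb hq
        rw [hcoef]
  · intro i _ hij
    by_cases hi2 : i % 2 = 0
    · simp only [U2, W2, if_pos hi2, if_pos hj2]
      rw [B2_inner_ne hee hij hi2 hj2, zero_smul]
    · simp [U2, W2, hi2]
  · intro h
    exact absurd (Finset.mem_range.mpr hj) h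

theorem key_eval (hee : ∀ a b : ℕ, ⟪ee a, ee b⟫ = if a = b ∧ a < n then 1 else 0)
    (hls : 0 < ls) (hla0 : ∀ m, 0 ≤ la m) :
    ∀ p < n, famOp (𝕜 := 𝕜) (U1 (𝕜 := 𝕜) ee la) (Z1 (𝕜 := 𝕜) ee la ls) n (ee p)
      + famOp (𝕜 := 𝕜) (U2 (𝕜 := 𝕜) ee la) (Z2 (𝕜 := 𝕜) ee la ls) n (ee p)
      = ((2 * la p / ls : ℝ) : 𝕜) • ee p := by
  intro p hp
  rw [famOp_apply, famOp_apply, ← Finset.sum_add_distrib]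
  by_cases hp2 : p % 2 = 0
  · rw [Finset.sum_eq_single p]
    · simp only [U1, U2, Z1, Z2, if_pos hp2]
      rw [B2_inner_ee_self hee hp, B2_inner_ee_self hee hp]
      by_cases hq : la p + la (p + 1) = 0
      · have h0 := (Q_zero hla0 hq).1
        rw [CC_zero hq, TT_zero hq, h0]
        norm_num [B2_zero]
      · have hC2 : CC la p ^ 2 * (la p + la (p + 1)) = la p := by
          rw [CC_sq hla0 hq]; field_simp
        simp only [B2, smul_add, smul_smul]
        match_scalars
        · push_cast
          rw [RR]
          have : (ls : ℝ) ≠ 0 := hls.ne'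
          push_cast
          norm_cast
          have key : ∀ r : ℝ, r = 2 * la p / ls * 1 → ((r : ℝ) : 𝕜) = 2 * (la p : 𝕜) / (ls : 𝕜) * 1 := by
            intro r hr; rw [hr]; push_cast; ring
          apply key
          linear_combination (2 / ls) * hC2
        · push_cast
          ring
    · intro k hk hkj
      by_cases hk2 : k % 2 = 0
      · simp only [U1, U2, Z1, Z2, if_pos hk2]
        rw [B2_inner_ee_ne hee (by omega) (by omega),
          B2_inner_ee_ne hee (by omega) (by omega)]
        simp
      · simp [U1, U2, Z1, Z2, hk2]
    · intro h
      exact absurd (Finset.mem_range.mpr hp) h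
  · obtain ⟨m, rfl⟩ : ∃ m, p = m + 1 := ⟨p - 1, by omega⟩
    rw [Finset.sum_eq_single m]
    · have hm2 : m % 2 = 0 := by omega
      simp only [U1, U2, Z1, Z2, if_pos hm2]
      rw [B2_inner_ee_succ hee hp, B2_inner_ee_succ hee hp]
      by_cases hq : la m + la (m + 1) = 0
      · have h0 := (Q_zero hla0 hq).2
        rw [TT_zero hq, h0]
        norm_num [B2_zero]
      · have hT2 : TT la m ^ 2 * (la m + la (m + 1)) = la (m + 1) := by
          rw [TT_sq hla0 hq]; field_simp
        simp only [B2, smul_add, smul_smul]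
        match_scalars
        · push_cast
          ring
        · push_cast
          rw [RR]
          norm_cast
          have key : ∀ r : ℝ, r = 2 * la (m + 1) / ls * 1 → ((r : ℝ) : 𝕜) = 2 * (la (m + 1) : 𝕜) / (ls : 𝕜) * 1 := by
            intro r hr; rw [hr]; push_cast; ring
          apply key
          linear_combination (2 / ls) * hT2
    · intro k hk hkj
      by_cases hk2 : k % 2 = 0
      · simp only [U1, U2, Z1, Z2, if_pos hk2]
        rw [B2_inner_ee_ne hee (by omega) (by omega),
          B2_inner_ee_ne hee (by omega) (by omega)]
        simp
      · simp [U1, U2, Z1, Z2, hk2]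
    · intro h
      exact absurd (Finset.mem_range.mpr (by omega : m < n)) h

end Facts

end Stmt11Aux

open Stmt11Aux

theorem stmt_11 {𝕜 E : Type*} [RCLike 𝕜] [NormedAddCommGroup E]
    [InnerProductSpace 𝕜 E] [FiniteDimensional 𝕜 E]
    (T : E →ₗ[𝕜] E) (hT : T ≠ 0) (hsa : T.IsSymmetric)
    (hpos : ∀ x : E, 0 ≤ RCLike.re (inner 𝕜 (T x) x : 𝕜)) :
    ∃ (v : ℝ) (P₁ P₂ : E →ₗ[𝕜] E), 0 < v ∧ P₁ ∘ₗ P₁ = P₁ ∧ P₂ ∘ₗ P₂ = P₂ ∧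
      T = ((v ^ 2 : ℝ) : 𝕜) • ((LinearMap.adjoint P₁) ∘ₗ P₁) +
          ((v ^ 2 : ℝ) : 𝕜) • ((LinearMap.adjoint P₂) ∘ₗ P₂) := by
  classical
  obtain ⟨n, hn⟩ : ∃ n, Module.finrank 𝕜 E = n := ⟨_, rfl⟩
  set b := hsa.eigenvectorBasis hn with hb_def
  set lam := hsa.eigenvalues hn with hlam_def
  have happly : ∀ i, T (b i) = (lam i : 𝕜) • b i := fun i => hsa.apply_eigenvectorBasis hn i
  have horth : ∀ i j : Fin n, (inner 𝕜 (b i) (b j) : 𝕜) = if i = j then 1 else 0 :=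
    orthonormal_iff_ite.mp b.orthonormal
  have hlam0 : ∀ i, 0 ≤ lam i := by
    intro i
    have h1 : (inner 𝕜 (T (b i)) (b i) : 𝕜) = ((lam i : ℝ) : 𝕜) := by
      rw [happly i, inner_smul_left, RCLike.conj_ofReal, horth i i, if_pos rfl, mul_one]
    have := hpos (b i)
    rw [h1, RCLike.ofReal_re] at this
    exact this
  have hn0 : 0 < n := by
    rcases Nat.eq_zero_or_pos n with h | h
    · exfalso
      apply hT
      have : Subsingleton E := Module.finrank_zero_iff.mp (by rw [hn, h])
      exact LinearMap.ext fun x => Subsingleton.elim _ _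
    · exact h
  have hex : ∃ i, lam i ≠ 0 := by
    by_contra hall
    push_neg at hall
    apply hT
    apply b.toBasis.ext
    intro i
    simp only [OrthonormalBasis.coe_toBasis, happly i, hall i]
    simp
  obtain ⟨i₁, hi₁⟩ := hex
  set Sv := (Finset.univ.filter fun i => lam i ≠ 0).image lam with hSv_def
  have hSvne : Sv.Nonempty :=
    ⟨lam i₁, Finset.mem_image_of_mem _ (Finset.mem_filter.mpr ⟨Finset.mem_univ _, hi₁⟩)⟩
  set ls := Sv.min' hSvne with hls_def
  obtain ⟨j₁, hj₁mem, hj₁⟩ := Finset.mem_image.mp (Sv.min'_mem hSvne)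
  have hj₁ne : lam j₁ ≠ 0 := (Finset.mem_filter.mp hj₁mem).2
  have hls : 0 < ls := by
    rw [hls_def, ← hj₁]
    exact lt_of_le_of_ne (hlam0 j₁) (Ne.symm hj₁ne)
  have hmin' : ∀ i, lam i ≠ 0 → ls ≤ lam i := by
    intro i hi
    rw [hls_def]
    exact Finset.min'_le Sv (lam i)
      (Finset.mem_image_of_mem _ (Finset.mem_filter.mpr ⟨Finset.mem_univ _, hi⟩))
  obtain ⟨i₀, -, hi₀⟩ := Finset.exists_min_image Finset.univ lam ⟨j₁, Finset.mem_univ _⟩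
  have hi₀' : lam i₀ = 0 ∨ lam i₀ = ls := by
    by_cases h : lam i₀ = 0
    · exact Or.inl h
    · refine Or.inr (le_antisymm ?_ (hmin' i₀ h))
      calc lam i₀ ≤ lam j₁ := hi₀ j₁ (Finset.mem_univ _)
        _ = ls := hj₁
  set lastI : Fin n := ⟨n - 1, by omega⟩ with hlastI_def
  set σ := Equiv.swap i₀ lastI with hσ_def
  set ee : ℕ → E := fun m => if h : m < n then b (σ ⟨m, h⟩) else 0 with hee_def
  set la : ℕ → ℝ := fun m => if h : m < n then lam (σ ⟨m, h⟩) else 0 with hla_def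
  have hee : ∀ a c : ℕ, (inner 𝕜 (ee a) (ee c) : 𝕜) = if a = c ∧ a < n then 1 else 0 := by
    intro a c
    by_cases ha : a < n
    · by_cases hc : c < n
      · simp only [hee_def, dif_pos ha, dif_pos hc, horth]
        by_cases hac : a = c
        · subst hac
          simp [ha]
        · rw [if_neg, if_neg]
          · exact fun h => hac h.1
          · intro h
            exact hac (by simpa using σ.injective h)
      · simp only [hee_def, dif_neg hc, inner_zero_right]
        rw [if_neg]
        intro h
        exact hc (h.1 ▸ ha)
    · simp only [hee_def, dif_neg ha, inner_zero_left]
      rw [if_neg]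
      exact fun h => ha h.2
  have hla0' : ∀ m, 0 ≤ la m := by
    intro m
    simp only [hla_def]
    split_ifs with h
    · exact hlam0 _
    · exact le_rfl
  have hlan : ∀ m, ¬ m < n → la m = 0 := by
    intro m h
    simp only [hla_def, dif_neg h]
  have hminla : ∀ m, la m ≠ 0 → ls ≤ la m := by
    intro m h
    simp only [hla_def] at h ⊢
    split_ifs with h' 
    · exact hmin' _ (by simpa [dif_pos h'] using h)
    · exact absurd (by simp [dif_neg h']) h
  have hlast : la (n - 1) = 0 ∨ la (n - 1) = ls := by
    have h1 : la (n - 1) = lam i₀ := by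
      simp only [hla_def, dif_pos (by omega : n - 1 < n)]
      congr 1
      have : (⟨n - 1, by omega⟩ : Fin n) = lastI := rfl
      rw [this, hσ_def, Equiv.swap_apply_right]
    rw [h1]
    exact hi₀'
  have hTee : ∀ m, m < n → T (ee m) = ((la m : ℝ) : 𝕜) • ee m := by
    intro m hm
    simp only [hee_def, hla_def, dif_pos hm]
    exact happly _
  refine ⟨Real.sqrt (ls / 2), famOp (𝕜 := 𝕜) (U1 (𝕜 := 𝕜) ee la) (W1 (𝕜 := 𝕜) ee la ls) n,
    famOp (𝕜 := 𝕜) (U2 (𝕜 := 𝕜) ee la) (W2 (𝕜 := 𝕜) ee la ls) n,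
    Real.sqrt_pos.mpr (by positivity), ?_, ?_, ?_⟩
  · exact famOp_comp _ _ _ _ _ n (sum_UW1 hee hls hla0' hlan)
  · exact famOp_comp _ _ _ _ _ n (sum_UW2 hee hls hla0' hlan)
  · have hv : Real.sqrt (ls / 2) ^ 2 = ls / 2 := Real.sq_sqrt (by positivity)
    have hadj1 : LinearMap.adjoint (famOp (𝕜 := 𝕜) (U1 (𝕜 := 𝕜) ee la)
        (W1 (𝕜 := 𝕜) ee la ls) n) ∘ₗ famOp (𝕜 := 𝕜) (U1 (𝕜 := 𝕜) ee la)
        (W1 (𝕜 := 𝕜) ee la ls) n = famOp (𝕜 := 𝕜) (U1 (𝕜 := 𝕜) ee la)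
        (Z1 (𝕜 := 𝕜) ee la ls) n := by
      rw [famOp_adjoint]
      exact famOp_comp _ _ _ _ _ n (sum_WW1 hee hls hla0' hminla hlan hlast)
    have hadj2 : LinearMap.adjoint (famOp (𝕜 := 𝕜) (U2 (𝕜 := 𝕜) ee la)
        (W2 (𝕜 := 𝕜) ee la ls) n) ∘ₗ famOp (𝕜 := 𝕜) (U2 (𝕜 := 𝕜) ee la)
        (W2 (𝕜 := 𝕜) ee la ls) n = famOp (𝕜 := 𝕜) (U2 (𝕜 := 𝕜) ee la)
        (Z2 (𝕜 := 𝕜) ee la ls) n := by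
      rw [famOp_adjoint]
      exact famOp_comp _ _ _ _ _ n (sum_WW2 hee hls hla0' hminla hlan hlast)
    rw [hadj1, hadj2]
    apply b.toBasis.ext
    intro i
    have hbi : ee ((σ i : Fin n) : ℕ) = b i := by
      simp only [hee_def, dif_pos (σ i).2]
      congr 1
      rw [Fin.eta, hσ_def, Equiv.swap_apply_self]
    simp only [OrthonormalBasis.coe_toBasis, LinearMap.add_apply, LinearMap.smul_apply]
    rw [← hbi, hTee _ (σ i).2, ← smul_add,
      key_eval hee hls hla0' ((σ i : Fin n) : ℕ) (σ i).2, smul_smul]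
    congr 1
    norm_cast
    rw [hv]
    field_simp
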